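/- Let R be a finite commutative local ring with maximal ideal 𝔪 and residue field of characteristic p, and let M be a finite R-module. Let ξ₁, …, ξ_l be i.i.d. R-valued random variables of law μ, whose support contains 0 and 1 and is not contained in any proper subring of R. Fix ε > 0, let α be the smallest nonzero value of P(ξ ≡ r mod ann(M)) over r ∈ R, and define β by max(‖μ mod 𝔪‖_∞, 1/p) = 1 − β. Then there exists a positive integer T, depending only on ε, M and the distribution of (ξ mod ann(M)), with the following property: for every l-tuple (m₁, …, m_l) ∈ M^l such that at least one Fourier coefficient of Σ_i m_i ξ_i has absolute value strictly between ε/|M| and 1, there exists an additive subgroup π of M such that (i) ‖Σ_i m_i ξ_i‖_∞ ≤ (1−α)(1+ε)/|π|; (ii) if π is an R-submodule of M then ‖Σ_i m_i ξ_i‖_∞ ≤ (1−β)(1+ε)/|π|; and (iii) m_i ∈ π for all but at most T·|M| indices i. -/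

import Mathlib

/-!
For tuples in the class `C₃` (some Fourier coefficient of `Σ m_i ξ_i` has
absolute value strictly between `ε/|M|` and `1`), there is a subgroup `π`
of `M` controlling `‖Σ m_i ξ_i‖_∞`, containing all but at most `T·|M|` of
the `m_i`, where `T` depends only on `ε`, `M` and the distribution of
`ξ mod ann(M)`.
-/

noncomputable section

-- The pushforward to the residue field of a distribution `μ` on `R`.
open Classical in
noncomputable def resLaw (R : Type) [CommRing R] [Fintype R] [IsLocalRing R]
    (μ : R → ℝ) (c : IsLocalRing.ResidueField R) : ℝ :=
  ∑ x ∈ Finset.univ.filter (fun x => IsLocalRing.residue R x = c), μ x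

-- The `l^∞` norm of `μ mod 𝔪` (its maximal point mass).
noncomputable def linfRes (R : Type) [CommRing R] [Fintype R] [IsLocalRing R]
    (μ : R → ℝ) : ℝ :=
  ⨆ c : IsLocalRing.ResidueField R, resLaw R μ c

-- The probability `P(ξ ≡ r mod ann(M))` for `ξ` of law `μ`.
open Classical in
noncomputable def annCosetProb (R : Type) [CommRing R] [Fintype R]
    (M : Type) [AddCommGroup M] [Module R M] (μ : R → ℝ) (r : R) : ℝ :=
  ∑ x ∈ Finset.univ.filter (fun x => x - r ∈ Module.annihilator R M), μ x

-- The law of `Σ_i m_i ξ_i` where `ξ_1, …, ξ_l` are i.i.d. of law `μ`.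
open Classical in
noncomputable def tupleLaw {R : Type} [CommRing R] [Fintype R]
    {M : Type} [AddCommGroup M] [Module R M] {l : ℕ}
    (μ : R → ℝ) (m : Fin l → M) (a : M) : ℝ :=
  ∑ x ∈ Finset.univ.filter (fun x : Fin l → R => ∑ i, x i • m i = a),
    ∏ i, μ (x i)

/-- The Fourier coefficient of a distribution `f` on the finite abelian group
`M` at an additive character `χ`. -/
noncomputable def fCoeff {M : Type} [AddCommGroup M] [Fintype M]
    (f : M → ℝ) (χ : AddChar M ℂ) : ℂ :=
  ∑ a : M, (f a : ℂ) * χ a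

/- ### Auxiliary material -/

set_option linter.unusedSectionVars false
set_option linter.unusedVariables false
set_option maxHeartbeats 1000000

open Finset

section SplitLemmas

lemma split_prod {l : ℕ} {A : Type*} [CommMonoid A] (i₀ : Fin l) (q : Fin l → A) :
    ∏ i, q i = q i₀ * ∏ j : {j : Fin l // j ≠ i₀}, q j.1 := by
  classical
  rw [← Finset.mul_prod_erase Finset.univ q (Finset.mem_univ i₀)]
  congr 1
  exact Finset.prod_subtype (p := fun j : Fin l => j ≠ i₀) (Finset.univ.erase i₀)
    (fun x => by simp) q

lemma split_sum {l : ℕ} {A : Type*} [AddCommMonoid A] (i₀ : Fin l) (q : Fin l → A) :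
    ∑ i, q i = q i₀ + ∑ j : {j : Fin l // j ≠ i₀}, q j.1 := by
  classical
  rw [← Finset.add_sum_erase Finset.univ q (Finset.mem_univ i₀)]
  congr 1
  exact Finset.sum_subtype (p := fun j : Fin l => j ≠ i₀) (Finset.univ.erase i₀)
    (fun x => by simp) q

end SplitLemmas

section QuotChar
variable {M : Type} [AddCommGroup M] [Fintype M]

open Classical in
/-- Characters of `M⧸π` correspond to characters of `M` trivial on `π`. -/
def quotCharEquiv (π : AddSubgroup M) :
    AddChar (M ⧸ π) ℂ ≃ {χ : AddChar M ℂ // ∀ z ∈ π, χ z = 1} where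
  toFun χ' := ⟨χ'.compAddMonoidHom (QuotientAddGroup.mk' π), by
    intro z hz
    rw [AddChar.compAddMonoidHom_apply]
    have : (QuotientAddGroup.mk' π) z = 0 := (QuotientAddGroup.eq_zero_iff z).2 hz
    rw [this, AddChar.map_zero_eq_one]⟩
  invFun χp :=
    AddChar.toAddMonoidHomEquiv.symm
      (QuotientAddGroup.lift π (AddChar.toAddMonoidHomEquiv χp.1)
        (fun z hz => by
          have : χp.1 z = 1 := χp.2 z hz
          simp [this]))
  left_inv χ' := by
    ext x
    refine QuotientAddGroup.induction_on x (fun y => ?_)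
    simp
  right_inv χp := by
    ext y
    simp

open Classical in
lemma sum_trivChar (π : AddSubgroup M) (y : M) :
    ∑ χ ∈ Finset.univ.filter (fun χ : AddChar M ℂ => ∀ z ∈ π, χ z = 1), χ y
      = if y ∈ π then (Nat.card (M ⧸ π) : ℂ) else 0 := by
  classical
  have : Fintype (M ⧸ π) := Fintype.ofFinite _
  rw [Finset.sum_subtype (p := fun χ : AddChar M ℂ => ∀ z ∈ π, χ z = 1)
    (Finset.univ.filter (fun χ : AddChar M ℂ => ∀ z ∈ π, χ z = 1))
    (fun χ => by simp) (fun χ : AddChar M ℂ => χ y)]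
  rw [← Equiv.sum_comp (quotCharEquiv π)
    (fun χ : {χ : AddChar M ℂ // ∀ z ∈ π, χ z = 1} => (χ : AddChar M ℂ) y)]
  have h1 : ∀ χ' : AddChar (M ⧸ π) ℂ,
      ((quotCharEquiv π χ' : AddChar M ℂ) : M → ℂ) y = χ' (QuotientAddGroup.mk y) := by
    intro χ'; rfl
  rw [Finset.sum_congr rfl fun χ' _ => h1 χ']
  rw [AddChar.sum_apply_eq_ite]
  rw [Nat.card_eq_fintype_card]
  congr 1
  simp [QuotientAddGroup.eq_zero_iff]

open Classical in
lemma card_trivChar (π : AddSubgroup M) :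
    (Finset.univ.filter (fun χ : AddChar M ℂ => ∀ z ∈ π, χ z = 1)).card
      = Nat.card (M ⧸ π) := by
  classical
  have : Fintype (M ⧸ π) := Fintype.ofFinite _
  rw [← Fintype.card_subtype, ← Fintype.card_congr (quotCharEquiv π),
    AddChar.card_eq, Nat.card_eq_fintype_card]

end QuotChar

section Master
variable {M : Type} [AddCommGroup M] [Fintype M]

open Classical in
/-- Fourier-analytic master bound: the probability of any point is controlled by
the mass of its `π`-coset divided by `|π|`, plus the largest Fourier coefficient
at a character nontrivial on `π`. -/
lemma master_bound (f : M → ℝ) (π : AddSubgroup M) (x₀ : M)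
    (B : ℝ) (hB0 : 0 ≤ B)
    (hB : ∀ χ : AddChar M ℂ, (¬ ∀ z ∈ π, χ z = 1) → ‖fCoeff f χ‖ ≤ B) :
    f x₀ ≤ (∑ a ∈ Finset.univ.filter (fun a : M => a - x₀ ∈ π), f a) / (Nat.card π : ℝ) + B := by
  classical
  set D := Fintype.card M with hD
  set Dq := Nat.card (M ⧸ π) with hDq
  set S := ∑ a ∈ Finset.univ.filter (fun a : M => a - x₀ ∈ π), f a with hS
  have expand : ∀ (t : Finset (AddChar M ℂ)),
      ∑ χ ∈ t, fCoeff f χ * χ (-x₀) = ∑ a : M, (f a : ℂ) * ∑ χ ∈ t, χ (a - x₀) := by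
    intro t
    unfold fCoeff
    rw [Finset.sum_congr rfl fun (χ : AddChar M ℂ) _ => Finset.sum_mul
      (Finset.univ) (fun a : M => (f a : ℂ) * χ a) (χ (-x₀))]
    rw [Finset.sum_comm]
    refine Finset.sum_congr rfl fun a _ => ?_
    rw [Finset.mul_sum]
    refine Finset.sum_congr rfl fun χ _ => ?_
    rw [mul_assoc, ← AddChar.map_add_eq_mul, sub_eq_add_neg]
  have inv1 : ∑ χ : AddChar M ℂ, fCoeff f χ * χ (-x₀) = (D : ℂ) * (f x₀ : ℂ) := by
    rw [expand]
    rw [Finset.sum_congr rfl fun a _ => by rw [AddChar.sum_apply_eq_ite, sub_eq_zero]]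
    simp [mul_comm, hD]
  set P : AddChar M ℂ → Prop := fun χ => ∀ z ∈ π, χ z = 1 with hP
  have split : ∑ χ : AddChar M ℂ, fCoeff f χ * χ (-x₀)
      = (∑ χ ∈ Finset.univ.filter P, fCoeff f χ * χ (-x₀))
        + ∑ χ ∈ Finset.univ.filter (fun χ => ¬ P χ), fCoeff f χ * χ (-x₀) :=
    (Finset.sum_filter_add_sum_filter_not _ _ _).symm
  have triv : ∑ χ ∈ Finset.univ.filter P, fCoeff f χ * χ (-x₀) = (Dq : ℂ) * (S : ℂ) := by
    rw [expand]
    rw [Finset.sum_congr rfl fun a _ => by rw [sum_trivChar π (a - x₀)]]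
    rw [Finset.sum_congr rfl fun a _ => (mul_ite _ ((f a : ℂ)) _ _)]
    rw [Finset.sum_congr rfl fun a _ => by rw [mul_zero]]
    rw [← Finset.sum_filter]
    rw [hS]
    push_cast
    rw [Finset.mul_sum]
    exact Finset.sum_congr rfl fun a _ => mul_comm _ _
  set Z := ∑ χ ∈ Finset.univ.filter (fun χ => ¬ P χ), fCoeff f χ * χ (-x₀) with hZ
  have hZabs : ‖Z‖ ≤ (D : ℝ) * B := by
    calc ‖Z‖ ≤ ∑ χ ∈ Finset.univ.filter (fun χ => ¬ P χ),
          ‖fCoeff f χ * χ (-x₀)‖ := norm_sum_le _ _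
      _ ≤ ∑ χ ∈ Finset.univ.filter (fun χ => ¬ P χ), B := by
          refine Finset.sum_le_sum fun χ hχ => ?_
          rw [norm_mul]
          have h1 : ‖χ (-x₀)‖ = 1 := by
            exact AddChar.norm_apply χ _
          rw [h1, mul_one]
          exact hB χ (Finset.mem_filter.1 hχ).2
      _ = ((Finset.univ.filter (fun χ : AddChar M ℂ => ¬ P χ)).card : ℝ) * B := by
          rw [Finset.sum_const, nsmul_eq_mul]
      _ ≤ (D : ℝ) * B := by
          refine mul_le_mul_of_nonneg_right ?_ hB0
          have h1 := Finset.card_filter_le (Finset.univ : Finset (AddChar M ℂ))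
            (fun χ : AddChar M ℂ => ¬ P χ)
          have h2 : Fintype.card (AddChar M ℂ) = D := AddChar.card_eq
          have h3 : (Finset.univ.filter (fun χ : AddChar M ℂ => ¬ P χ)).card ≤ D := by
            rw [← h2]; simpa [Finset.card_univ] using h1
          exact_mod_cast h3
  have hcomb : (D : ℝ) * f x₀ ≤ (Dq : ℝ) * S + (D : ℝ) * B := by
    have h3 : (D : ℂ) * (f x₀ : ℂ) = (Dq : ℂ) * (S : ℂ) + Z := by
      rw [← inv1, split, triv]
    have h4 : ((D : ℝ) * f x₀ : ℝ) - (Dq : ℝ) * S = Z.re := by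
      have := congrArg Complex.re h3
      push_cast at this ⊢
      simp at this
      linarith [this]
    have h5 : Z.re ≤ (D : ℝ) * B := le_trans (Complex.re_le_norm Z) hZabs
    linarith
  have hDpos : 0 < (D : ℝ) := by
    have : 0 < D := Fintype.card_pos
    exact_mod_cast this
  have hcard : (D : ℝ) = (Dq : ℝ) * (Nat.card π : ℝ) := by
    rw [hD, hDq]
    rw [← Nat.card_eq_fintype_card]
    exact_mod_cast congrArg Nat.cast (AddSubgroup.card_eq_card_quotient_mul_card_addSubgroup π)
  have hπpos : 0 < (Nat.card π : ℝ) := by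
    have : 0 < Nat.card π := Nat.card_pos
    exact_mod_cast this
  rw [hcard] at hcomb
  have hq : (0:ℝ) < (Dq : ℝ) := by
    have : 0 < Dq := Nat.card_pos
    exact_mod_cast this
  rw [div_add' _ _ _ (ne_of_gt hπpos), le_div_iff₀ hπpos]
  nlinarith [hcomb, hq, hπpos]

end Master

section Aux
variable {R : Type} [CommRing R] [Fintype R] {M : Type} [AddCommGroup M] [Module R M] [Fintype M]

/-- The Fourier coefficient of the law of `ξ • b`. -/
def gc (μ : R → ℝ) (χ : AddChar M ℂ) (b : M) : ℂ := ∑ s : R, (μ s : ℂ) * χ (s • b)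

lemma abs_addChar (χ : AddChar M ℂ) (a : M) : ‖χ a‖ = 1 := by
  exact AddChar.norm_apply χ a

lemma tupleLaw_nonneg {l : ℕ} {μ : R → ℝ} (hμ0 : ∀ r, 0 ≤ μ r) (m : Fin l → M) (a : M) :
    0 ≤ tupleLaw μ m a :=
  Finset.sum_nonneg fun x _ => Finset.prod_nonneg fun i _ => hμ0 _

lemma addChar_map_sum {ι : Type*} (χ : AddChar M ℂ) (s : Finset ι) (v : ι → M) :
    χ (∑ i ∈ s, v i) = ∏ i ∈ s, χ (v i) := by
  classical
  induction s using Finset.induction with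
  | empty => simp
  | insert a s h ih => rw [Finset.sum_insert h, Finset.prod_insert h, AddChar.map_add_eq_mul, ih]

/-- Factorization of the Fourier coefficient of `tupleLaw`. -/
lemma fCoeff_tupleLaw {l : ℕ} (μ : R → ℝ) (m : Fin l → M) (χ : AddChar M ℂ) :
    fCoeff (tupleLaw μ m) χ = ∏ i, gc μ χ (m i) := by
  classical
  have h1 : fCoeff (tupleLaw μ m) χ
      = ∑ a : M, ∑ x ∈ Finset.univ.filter (fun x : Fin l → R => ∑ i, x i • m i = a),
          (∏ i, (μ (x i) : ℂ)) * χ (∑ i, x i • m i) := by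
    unfold fCoeff tupleLaw
    refine Finset.sum_congr rfl fun a _ => ?_
    push_cast
    rw [Finset.sum_mul]
    refine Finset.sum_congr rfl fun x hx => ?_
    rw [(Finset.mem_filter.1 hx).2]
  rw [h1, Finset.sum_fiberwise (g := fun x : Fin l → R => ∑ i, x i • m i)
    (f := fun x => (∏ i, (μ (x i) : ℂ)) * χ (∑ i, x i • m i))]
  have h2 : ∀ x : Fin l → R, (∏ i, (μ (x i) : ℂ)) * χ (∑ i, x i • m i)
      = ∏ i, ((μ (x i) : ℂ) * χ (x i • m i)) := by
    intro x
    rw [addChar_map_sum, Finset.prod_mul_distrib]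
  rw [Finset.sum_congr rfl fun x _ => h2 x]
  have := Finset.prod_univ_sum (fun _ : Fin l => (Finset.univ : Finset R))
    (fun i s => (μ s : ℂ) * χ (s • m i))
  rw [Fintype.piFinset_univ] at this
  rw [← this]
  rfl

lemma mul_eq_one_of_re {z w : ℂ} (hz : ‖z‖ = 1) (hw : ‖w‖ = 1)
    (h : (z * w).re = 1) : z * w = 1 := by
  have habs : ‖z * w‖ = 1 := by rw [norm_mul, hz, hw, one_mul]
  have h2 : Complex.normSq (z * w) = 1 := by
    rw [← Complex.sq_norm, habs, one_pow]
  rw [Complex.normSq_apply, h] at h2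
  have him : (z * w).im = 0 := by nlinarith [sq_nonneg ((z*w).im)]
  exact Complex.ext (by simpa using h) (by simpa using him)

lemma gc_abs_le (μ : R → ℝ) (hμ0 : ∀ r, 0 ≤ μ r) (hμ1 : ∑ r, μ r = 1)
    (χ : AddChar M ℂ) (b : M) : ‖gc μ χ b‖ ≤ 1 := by
  calc ‖gc μ χ b‖ ≤ ∑ s : R, ‖(μ s : ℂ) * χ (s • b)‖ :=
        norm_sum_le _ _
    _ = ∑ s : R, μ s := by
        refine Finset.sum_congr rfl fun s _ => ?_
        rw [norm_mul, abs_addChar, mul_one, Complex.norm_of_nonneg (hμ0 s)]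
    _ = 1 := hμ1

lemma gc_eq_one (μ : R → ℝ) (hμ1 : ∑ r, μ r = 1) {χ : AddChar M ℂ} {b : M}
    (h : ∀ s, μ s ≠ 0 → χ (s • b) = 1) : gc μ χ b = 1 := by
  have : ∀ s : R, (μ s : ℂ) * χ (s • b) = (μ s : ℂ) := by
    intro s
    by_cases hs : μ s = 0
    · simp [hs]
    · rw [h s hs, mul_one]
  rw [gc, Finset.sum_congr rfl fun s _ => this s, ← Complex.ofReal_sum, hμ1,
    Complex.ofReal_one]

lemma gc_abs_eq_one (μ : R → ℝ) (hμ0 : ∀ r, 0 ≤ μ r) (hμ1 : ∑ r, μ r = 1) (h0 : μ 0 ≠ 0)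
    {χ : AddChar M ℂ} {b : M} (habs : ‖gc μ χ b‖ = 1) :
    ∀ s, μ s ≠ 0 → χ (s • b) = 1 := by
  set g := gc μ χ b with hg
  set u := starRingEnd ℂ g with hu
  have hgabs : ‖u‖ = 1 := by rw [hu, Complex.norm_conj]; exact habs
  have key : ∑ s : R, μ s * (1 - (u * χ (s • b)).re) = 0 := by
    have h2 : (u * g).re = 1 := by
      rw [hu, mul_comm, Complex.mul_conj, ← Complex.sq_norm, habs]
      norm_num
    have h3 : ∑ s : R, μ s * (u * χ (s • b)).re = (u * g).re := by
      rw [hg, gc, Finset.mul_sum, Complex.re_sum]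
      refine Finset.sum_congr rfl fun s _ => ?_
      rw [show u * ((μ s : ℂ) * χ (s • b)) = (μ s : ℂ) * (u * χ (s • b)) by ring,
        Complex.re_ofReal_mul]
    have h4 : ∑ s : R, μ s * (1 - (u * χ (s • b)).re)
        = ∑ s : R, μ s - ∑ s : R, μ s * (u * χ (s • b)).re := by
      rw [← Finset.sum_sub_distrib]
      exact Finset.sum_congr rfl fun s _ => by ring
    rw [h4, h3, hμ1, h2, sub_self]
  have hterm : ∀ s : R, s ∈ Finset.univ → 0 ≤ μ s * (1 - (u * χ (s • b)).re) := by
    intro s _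
    have : (u * χ (s • b)).re ≤ 1 := by
      calc (u * χ (s • b)).re ≤ ‖u * χ (s • b)‖ := Complex.re_le_norm _
        _ = 1 := by rw [norm_mul, hgabs, abs_addChar, mul_one]
    exact mul_nonneg (hμ0 s) (by linarith)
  have hzero : ∀ s : R, μ s ≠ 0 → (u * χ (s • b)).re = 1 := by
    intro s hs
    have h5 := (Finset.sum_eq_zero_iff_of_nonneg hterm).1 key s (mem_univ s)
    rcases mul_eq_zero.1 h5 with h | h
    · exact absurd h hs
    · linarith
  have hval : ∀ s : R, μ s ≠ 0 → χ (s • b) = g := by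
    intro s hs
    have h6 : u * χ (s • b) = 1 :=
      mul_eq_one_of_re hgabs (abs_addChar χ _) (hzero s hs)
    have h7 : g * u = 1 := by
      rw [hu, Complex.mul_conj, ← Complex.sq_norm, habs]; norm_num
    calc χ (s • b) = g * u * χ (s • b) := by rw [h7, one_mul]
      _ = g * (u * χ (s • b)) := by ring
      _ = g := by rw [h6, mul_one]
  have hg1 : g = 1 := by
    have := hval 0 h0
    rw [zero_smul, AddChar.map_zero_eq_one] at this
    exact this.symm
  intro s hs
  rw [hval s hs, hg1]

/-- The spectral gap constant of `μ`. -/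
lemma gap_const (μ : R → ℝ) (hμ0 : ∀ r, 0 ≤ μ r) (hμ1 : ∑ r, μ r = 1) (h0 : μ 0 ≠ 0) :
    ∃ c : ℝ, 0 < c ∧ c ≤ 1 ∧
      ∀ (χ : AddChar M ℂ) (b : M), gc μ χ b ≠ 1 → ‖gc μ χ b‖ ≤ 1 - c := by
  classical
  set GS := (Finset.univ : Finset (AddChar M ℂ × M)).filter
    (fun p => gc μ p.1 p.2 ≠ 1) with hGSdef
  by_cases hGS : GS.Nonempty
  · set v := GS.sup' hGS (fun p => ‖gc μ p.1 p.2‖) with hv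
    have hmemlt : ∀ p ∈ GS, ‖gc μ p.1 p.2‖ < 1 := by
      intro p hp
      have hne : gc μ p.1 p.2 ≠ 1 := (Finset.mem_filter.1 hp).2
      have hle := gc_abs_le μ hμ0 hμ1 p.1 p.2
      rcases lt_or_eq_of_le hle with h | h
      · exact h
      · exact absurd (gc_eq_one μ hμ1 (gc_abs_eq_one μ hμ0 hμ1 h0 h)) hne
    have hvlt : v < 1 := by
      rw [hv, Finset.sup'_lt_iff]
      exact hmemlt
    have hv0 : 0 ≤ v := by
      obtain ⟨p, hp⟩ := hGS
      have := Finset.le_sup' (fun p : AddChar M ℂ × M => ‖gc μ p.1 p.2‖) hp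
      exact le_trans (norm_nonneg _) this
    refine ⟨1 - v, by linarith, by linarith, fun χ b h => ?_⟩
    have hmem : (χ, b) ∈ GS := Finset.mem_filter.2 ⟨Finset.mem_univ _, h⟩
    have := Finset.le_sup' (fun p : AddChar M ℂ × M => ‖gc μ p.1 p.2‖) hmem
    simpa using by linarith [this]
  · refine ⟨1, one_pos, le_refl 1, fun χ b h => ?_⟩
    exact absurd ⟨(χ, b), Finset.mem_filter.2 ⟨Finset.mem_univ _, h⟩⟩ hGS

open Classical in
lemma coset_mass_le {l : ℕ} (μ : R → ℝ) (hμ0 : ∀ r, 0 ≤ μ r) (hμ1 : ∑ r, μ r = 1)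
    (m : Fin l → M) (π : AddSubgroup M) (i₀ : Fin l) (x₀ : M) (c' : ℝ)
    (hc' : ∀ v : M, ∑ s ∈ Finset.univ.filter (fun s : R => s • m i₀ - v ∈ π), μ s ≤ c') :
    ∑ a ∈ Finset.univ.filter (fun a : M => a - x₀ ∈ π), tupleLaw μ m a ≤ c' := by
  classical
  have step1 : ∑ a ∈ Finset.univ.filter (fun a : M => a - x₀ ∈ π), tupleLaw μ m a
      = ∑ x ∈ Finset.univ.filter (fun x : Fin l → R => (∑ i, x i • m i) - x₀ ∈ π),
          ∏ i, μ (x i) := by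
    unfold tupleLaw
    rw [Finset.sum_fiberwise_eq_sum_filter Finset.univ
      (Finset.univ.filter (fun a : M => a - x₀ ∈ π))
      (fun x : Fin l → R => ∑ i, x i • m i) (fun x => ∏ i, μ (x i))]
    congr 1
    apply Finset.filter_congr
    intro x _
    simp
  rw [step1]
  set e := Equiv.piSplitAt i₀ (fun _ : Fin l => R) with he
  rw [Finset.sum_filter]
  rw [← Equiv.sum_comp e.symm
    (fun x : Fin l → R => if (∑ i, x i • m i) - x₀ ∈ π then ∏ i, μ (x i) else 0)]
  rw [Fintype.sum_prod_type]
  have hval : ∀ (s : R) (y : {j : Fin l // j ≠ i₀} → R),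
      (e.symm (s, y)) i₀ = s ∧ ∀ j : {j : Fin l // j ≠ i₀}, (e.symm (s, y)) j.1 = y j := by
    intro s y
    constructor
    · simp [he, Equiv.piSplitAt_symm_apply]
    · intro j
      simp [he, Equiv.piSplitAt_symm_apply, j.2]
  have key : ∀ (s : R) (y : {j : Fin l // j ≠ i₀} → R),
      (if (∑ i, (e.symm (s, y)) i • m i) - x₀ ∈ π then ∏ i, μ ((e.symm (s, y)) i) else 0)
      = (∏ j : {j : Fin l // j ≠ i₀}, μ (y j)) *
        (if s • m i₀ - (x₀ - ∑ j : {j : Fin l // j ≠ i₀}, y j • m j.1) ∈ π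
          then μ s else 0) := by
    intro s y
    obtain ⟨h1, h2⟩ := hval s y
    have hsum : (∑ i, (e.symm (s, y)) i • m i)
        = s • m i₀ + ∑ j : {j : Fin l // j ≠ i₀}, y j • m j.1 := by
      rw [split_sum i₀ (fun i => (e.symm (s, y)) i • m i), h1]
      congr 1
      exact Finset.sum_congr rfl fun j _ => by rw [h2 j]
    have hprod : (∏ i, μ ((e.symm (s, y)) i))
        = μ s * ∏ j : {j : Fin l // j ≠ i₀}, μ (y j) := by
      rw [split_prod i₀ (fun i => μ ((e.symm (s, y)) i)), h1]
      congr 1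
      exact Finset.prod_congr rfl fun j _ => by rw [h2 j]
    rw [hsum, hprod]
    have habel : (s • m i₀ + ∑ j : {j : Fin l // j ≠ i₀}, y j • m j.1) - x₀
        = s • m i₀ - (x₀ - ∑ j : {j : Fin l // j ≠ i₀}, y j • m j.1) := by abel
    rw [habel]
    split_ifs with hh
    · ring
    · ring
  calc ∑ s : R, ∑ y : {j : Fin l // j ≠ i₀} → R,
        (if (∑ i, (e.symm (s, y)) i • m i) - x₀ ∈ π then ∏ i, μ ((e.symm (s, y)) i) else 0)
      = ∑ y : {j : Fin l // j ≠ i₀} → R, ∑ s : R,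
        (∏ j : {j : Fin l // j ≠ i₀}, μ (y j)) *
        (if s • m i₀ - (x₀ - ∑ j : {j : Fin l // j ≠ i₀}, y j • m j.1) ∈ π
          then μ s else 0) := by
        rw [Finset.sum_comm]
        exact Finset.sum_congr rfl fun y _ => Finset.sum_congr rfl fun s _ => key s y
    _ ≤ ∑ y : {j : Fin l // j ≠ i₀} → R, (∏ j : {j : Fin l // j ≠ i₀}, μ (y j)) * c' := by
        refine Finset.sum_le_sum fun y _ => ?_
        rw [← Finset.mul_sum]
        refine mul_le_mul_of_nonneg_left ?_ (Finset.prod_nonneg fun j _ => hμ0 _)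
        rw [← Finset.sum_filter]
        exact hc' _
    _ = c' := by
        rw [← Finset.sum_mul]
        have : ∑ y : {j : Fin l // j ≠ i₀} → R, ∏ j : {j : Fin l // j ≠ i₀}, μ (y j) = 1 := by
          have := Finset.prod_univ_sum
            (fun _ : {j : Fin l // j ≠ i₀} => (Finset.univ : Finset R)) (fun _ s => μ s)
          rw [Fintype.piFinset_univ] at this
          rw [← this, Finset.prod_const, hμ1, one_pow]
        rw [this, one_mul]

end Aux

/-- **Structure theorem for `C₃` tuples.** -/
theorem c3_structure
    (R : Type) [CommRing R] [Fintype R] [IsLocalRing R]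
    (p : ℕ) (hp : CharP (IsLocalRing.ResidueField R) p)
    (M : Type) [AddCommGroup M] [Module R M] [Fintype M]
    (ε : ℝ) (hε : 0 < ε)
    (μ : R → ℝ) (hμ0 : ∀ r, 0 ≤ μ r) (hμ1 : ∑ r, μ r = 1)
    (h0 : μ 0 ≠ 0) (h1 : μ 1 ≠ 0)
    (hSubring : ∀ S : Subring R, S ≠ ⊤ → ¬ (∀ x : R, μ x ≠ 0 → x ∈ S))
    (α : ℝ)
    (hα : IsLeast {v : ℝ | v ≠ 0 ∧ ∃ r : R, v = annCosetProb R M μ r} α)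
    (β : ℝ) (hβ : max (linfRes R μ) (1 / (p : ℝ)) = 1 - β) :
    ∃ T : ℕ, 0 < T ∧
      ∀ (l : ℕ) (m : Fin l → M),
        (∃ χ : AddChar M ℂ,
            ε / (Fintype.card M : ℝ) < ‖fCoeff (tupleLaw μ m) χ‖ ∧
            ‖fCoeff (tupleLaw μ m) χ‖ < 1) →
        ∃ π : AddSubgroup M,
          (∀ a : M, tupleLaw μ m a ≤ (1 - α) * (1 + ε) / (Nat.card π : ℝ)) ∧
          ((∀ (r : R), ∀ x ∈ π, r • x ∈ π) →
            ∀ a : M, tupleLaw μ m a ≤ (1 - β) * (1 + ε) / (Nat.card π : ℝ)) ∧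
          (open Classical in
            (Finset.univ.filter (fun i : Fin l => m i ∉ π)).card ≤ T * Fintype.card M) := by
  classical
  have hμ0pos : 0 < μ 0 := lt_of_le_of_ne (hμ0 0) (Ne.symm h0)
  have hμ1pos : 0 < μ 1 := lt_of_le_of_ne (hμ0 1) (Ne.symm h1)
  have hcardM : 0 < (Fintype.card M : ℝ) := by exact_mod_cast Fintype.card_pos
  obtain ⟨c, hcpos, hcle, hcgap⟩ := gap_const (M := M) μ hμ0 hμ1 h0
  set γ : ℝ := min (1/2) (μ 0) with hγ
  have hγpos : 0 < γ := lt_min (by norm_num) hμ0pos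
  have hγle1 : γ ≤ 1 := le_trans (min_le_left _ _) (by norm_num)
  set κ : ℝ := ε * γ / (Fintype.card M : ℝ) with hκ
  have hκpos : 0 < κ := div_pos (mul_pos hε hγpos) hcardM
  obtain ⟨N, hN⟩ := exists_pow_lt_of_lt_one hκpos (by linarith : 1 - c < 1)
  refine ⟨N + 1, Nat.succ_pos N, ?_⟩
  intro l m hyp
  obtain ⟨χ₀, hχlow, hχhigh⟩ := hyp
  set T := N + 1 with hT
  have h1c0 : (0:ℝ) ≤ 1 - c := by linarith
  have hpowT : (1 - c)^T ≤ (1 - c)^N :=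
    pow_le_pow_of_le_one h1c0 (by linarith) (Nat.le_succ N)
  have hpowκ : (1 - c)^T < κ := lt_of_le_of_lt hpowT hN
  have hpow0 : (0:ℝ) ≤ (1 - c)^T := pow_nonneg h1c0 T
  -- `1` does not annihilate `M` (otherwise the Fourier hypothesis is contradictory)
  have hann : (1 : R) ∉ Module.annihilator R M := by
    intro hann1
    have hall : ∀ (χ : AddChar M ℂ) (b : M), gc μ χ b = 1 := by
      intro χ b
      refine gc_eq_one μ hμ1 fun s _ => ?_
      have hsann : s ∈ Module.annihilator R M := by
        have htop : Module.annihilator R M = ⊤ := (Ideal.eq_top_iff_one _).2 hann1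
        rw [htop]; trivial
      have hzero : s • b = 0 := Module.mem_annihilator.1 hsann b
      rw [hzero, AddChar.map_zero_eq_one]
    have h9 : fCoeff (tupleLaw μ m) χ₀ = 1 := by
      rw [fCoeff_tupleLaw]; exact Finset.prod_eq_one fun i _ => hall χ₀ (m i)
    rw [h9] at hχhigh; simp at hχhigh
  -- `α` facts
  have hannP : ∀ r : R, μ r ≠ 0 → α ≤ annCosetProb R M μ r := by
    intro r hr
    have hmem : r ∈ Finset.univ.filter (fun x : R => x - r ∈ Module.annihilator R M) := by
      simp
    have hge : μ r ≤ annCosetProb R M μ r := by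
      unfold annCosetProb
      exact Finset.single_le_sum (fun x _ => hμ0 x) hmem
    have hrpos : 0 < μ r := lt_of_le_of_ne (hμ0 r) (Ne.symm hr)
    exact hα.2 ⟨ne_of_gt (lt_of_lt_of_le hrpos hge), r, rfl⟩
  have hα12 : α ≤ 1/2 := by
    have hd : Disjoint
        (Finset.univ.filter (fun x : R => x - 0 ∈ Module.annihilator R M))
        (Finset.univ.filter (fun x : R => x - 1 ∈ Module.annihilator R M)) := by
      rw [Finset.disjoint_left]
      intro x hx0 hx1
      have h2 : x - 0 ∈ Module.annihilator R M := (Finset.mem_filter.1 hx0).2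
      have h3 : x - 1 ∈ Module.annihilator R M := (Finset.mem_filter.1 hx1).2
      have h4 : (x - 0) - (x - 1) ∈ Module.annihilator R M := Submodule.sub_mem _ h2 h3
      have h5 : (x - 0) - (x - 1) = (1:R) := by ring
      rw [h5] at h4
      exact hann h4
    have hsum : annCosetProb R M μ 0 + annCosetProb R M μ 1 ≤ 1 := by
      unfold annCosetProb
      rw [← Finset.sum_union hd, ← hμ1]
      exact Finset.sum_le_sum_of_subset_of_nonneg (Finset.subset_univ _) (fun x _ _ => hμ0 x)
    have h6 := hannP 0 h0
    have h7 := hannP 1 h1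
    linarith
  have hγα : γ ≤ 1 - α := le_trans (min_le_left _ _) (by linarith)
  -- `β` facts
  have hfinRF : Finite (IsLocalRing.ResidueField R) :=
    Finite.of_surjective _ IsLocalRing.residue_surjective
  have hresle : ∀ cc, resLaw R μ cc ≤ linfRes R μ := fun cc =>
    le_ciSup (Set.Finite.bddAbove (Set.finite_range _)) cc
  have hβ1 : linfRes R μ ≤ 1 - β := hβ ▸ le_max_left _ _
  have hμ0res : μ 0 ≤ resLaw R μ (IsLocalRing.residue R 0) := by
    unfold resLaw
    exact Finset.single_le_sum (fun x _ => hμ0 x) (by simp)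
  have hγβ : γ ≤ 1 - β :=
    le_trans (min_le_right _ _) (le_trans hμ0res (le_trans (hresle _) hβ1))
  -- the popular values and the subgroup they generate
  set Pop : Finset M := Finset.univ.filter
    (fun a : M => T ≤ (Finset.univ.filter (fun i : Fin l => m i = a)).card) with hPop
  set gens : Set M := {x : M | ∃ s : R, ∃ a : M, μ s ≠ 0 ∧ a ∈ Pop ∧ x = s • a} with hgens
  set π : AddSubgroup M := AddSubgroup.closure gens with hπdef
  have hπpos : (0:ℝ) < (Nat.card π : ℝ) := by
    have : 0 < Nat.card π := Nat.card_pos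
    exact_mod_cast this
  have hπle : (Nat.card π : ℝ) ≤ (Fintype.card M : ℝ) := by
    have h8 : Nat.card π ≤ Fintype.card M := by
      rw [← Nat.card_eq_fintype_card]
      exact Nat.card_le_card_of_injective _ Subtype.val_injective
    exact_mod_cast h8
  -- characters nontrivial on `π` have tiny Fourier coefficient
  have hBbound : ∀ χ : AddChar M ℂ, (¬ ∀ z ∈ π, χ z = 1) →
      ‖fCoeff (tupleLaw μ m) χ‖ ≤ (1 - c)^T := by
    intro χ hχ
    have hgen : ∃ x ∈ gens, χ x ≠ 1 := by
      by_contra hno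
      push_neg at hno
      apply hχ
      intro z hz
      set K : AddSubgroup M :=
        { carrier := {z : M | χ z = 1}
          zero_mem' := AddChar.map_zero_eq_one χ
          add_mem' := fun {x y} hx hy => by
            simp only [Set.mem_setOf_eq] at *
            rw [AddChar.map_add_eq_mul, hx, hy, one_mul]
          neg_mem' := fun {x} hx => by
            simp only [Set.mem_setOf_eq] at *
            have h9 : χ (-x) * χ x = 1 := by
              rw [← AddChar.map_add_eq_mul]; simp
            rw [hx, mul_one] at h9; exact h9 } with hK
      have hle : π ≤ K := (AddSubgroup.closure_le K).2 (fun x hx => hno x hx)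
      exact hle hz
    obtain ⟨x, hxg, hxne⟩ := hgen
    obtain ⟨s, a, hs, haPop, rfl⟩ := hxg
    have hgne : gc μ χ a ≠ 1 := by
      intro hone
      exact hxne (gc_abs_eq_one μ hμ0 hμ1 h0 (by rw [hone]; simp) s hs)
    have hgle : ‖gc μ χ a‖ ≤ 1 - c := hcgap χ a hgne
    rw [fCoeff_tupleLaw]
    rw [show ‖∏ i, gc μ χ (m i)‖ = ∏ i, ‖gc μ χ (m i)‖ from
      norm_prod _ _]
    rw [← Finset.prod_filter_mul_prod_filter_not Finset.univ (fun i : Fin l => m i = a)]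
    have hcardPop : T ≤ (Finset.univ.filter (fun i : Fin l => m i = a)).card :=
      (Finset.mem_filter.1 haPop).2
    have hpart1 : ∏ i ∈ Finset.univ.filter (fun i : Fin l => m i = a),
        ‖gc μ χ (m i)‖ ≤ (1 - c)^T := by
      calc ∏ i ∈ Finset.univ.filter (fun i : Fin l => m i = a), ‖gc μ χ (m i)‖
          = (‖gc μ χ a‖) ^ (Finset.univ.filter (fun i : Fin l => m i = a)).card := by
            rw [Finset.prod_congr rfl (fun i hi => by rw [(Finset.mem_filter.1 hi).2]),
              Finset.prod_const]
        _ ≤ (1 - c) ^ (Finset.univ.filter (fun i : Fin l => m i = a)).card :=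
            pow_le_pow_left₀ (norm_nonneg _) hgle _
        _ ≤ (1 - c)^T := pow_le_pow_of_le_one h1c0 (by linarith) hcardPop
    have hpart2 : ∏ i ∈ Finset.univ.filter (fun i : Fin l => ¬ m i = a),
        ‖gc μ χ (m i)‖ ≤ 1 :=
      Finset.prod_le_one (fun i _ => norm_nonneg _)
        (fun i _ => gc_abs_le μ hμ0 hμ1 χ (m i))
    calc (∏ i ∈ Finset.univ.filter (fun i : Fin l => m i = a), ‖gc μ χ (m i)‖)
          * ∏ i ∈ Finset.univ.filter (fun i : Fin l => ¬ m i = a), ‖gc μ χ (m i)‖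
        ≤ (1 - c)^T * 1 := by
          refine mul_le_mul hpart1 hpart2 ?_ hpow0
          exact Finset.prod_nonneg fun i _ => norm_nonneg _
      _ = (1 - c)^T := mul_one _
  -- `χ₀` is trivial on `π`
  have hκlt : κ ≤ ε / (Fintype.card M : ℝ) := by
    rw [hκ, div_le_div_iff₀ hcardM hcardM]
    nlinarith [mul_le_mul_of_nonneg_left hγle1 (mul_pos hε hcardM).le]
  have hχ₀triv : ∀ z ∈ π, χ₀ z = 1 := by
    by_contra hno
    have h10 := hBbound χ₀ hno
    linarith
  -- find a coordinate whose factor is nontrivial at `χ₀`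
  have hex : ∃ i : Fin l, gc μ χ₀ (m i) ≠ 1 := by
    by_contra hno
    push_neg at hno
    have h9 : fCoeff (tupleLaw μ m) χ₀ = 1 := by
      rw [fCoeff_tupleLaw]; exact Finset.prod_eq_one fun i _ => hno i
    rw [h9] at hχhigh; simp at hχhigh
  obtain ⟨i₀, hi₀⟩ := hex
  have hexs : ∃ s : R, μ s ≠ 0 ∧ χ₀ (s • m i₀) ≠ 1 := by
    by_contra hno
    push_neg at hno
    exact hi₀ (gc_eq_one μ hμ1 (fun s hs => hno s hs))
  obtain ⟨s₀, hs₀, hχs₀⟩ := hexs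
  have hs₀π : s₀ • m i₀ ∉ π := fun hmem => hχs₀ (hχ₀triv _ hmem)
  -- mass of cosets of `J = {s : s • m i₀ ∈ π}`
  have hJ0 : α ≤ ∑ s ∈ Finset.univ.filter (fun s : R => s • m i₀ ∈ π), μ s := by
    refine le_trans (hannP 0 h0) ?_
    unfold annCosetProb
    refine Finset.sum_le_sum_of_subset_of_nonneg ?_ (fun x _ _ => hμ0 x)
    intro x hx
    simp only [Finset.mem_filter, Finset.mem_univ, true_and] at hx ⊢
    rw [sub_zero] at hx
    have h11 : x • m i₀ = 0 := Module.mem_annihilator.1 hx (m i₀)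
    rw [h11]; exact π.zero_mem
  have hJs : α ≤ ∑ s ∈ Finset.univ.filter (fun s : R => (s - s₀) • m i₀ ∈ π), μ s := by
    refine le_trans (hannP s₀ hs₀) ?_
    unfold annCosetProb
    refine Finset.sum_le_sum_of_subset_of_nonneg ?_ (fun x _ _ => hμ0 x)
    intro x hx
    simp only [Finset.mem_filter, Finset.mem_univ, true_and] at hx ⊢
    have h11 : (x - s₀) • m i₀ = 0 := Module.mem_annihilator.1 hx (m i₀)
    rw [h11]; exact π.zero_mem
  have hM1 : ∀ v : M, ∑ s ∈ Finset.univ.filter (fun s : R => s • m i₀ - v ∈ π), μ s ≤ 1 - α := by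
    intro v
    by_cases hcase : ∃ s₁ ∈ Finset.univ.filter (fun s : R => s • m i₀ - v ∈ π), s₁ • m i₀ ∈ π
    · obtain ⟨s₁, hs₁A, hs₁π⟩ := hcase
      have hvπ : v ∈ π := by
        have h12 : s₁ • m i₀ - v ∈ π := (Finset.mem_filter.1 hs₁A).2
        have h13 := π.sub_mem hs₁π h12
        simpa using h13
      have hdisj : Disjoint (Finset.univ.filter (fun s : R => s • m i₀ - v ∈ π))
          (Finset.univ.filter (fun s : R => (s - s₀) • m i₀ ∈ π)) := by
        rw [Finset.disjoint_left]
        intro s₂ hs₂A hs₂J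
        have h12 : s₂ • m i₀ - v ∈ π := (Finset.mem_filter.1 hs₂A).2
        have h13 : (s₂ - s₀) • m i₀ ∈ π := (Finset.mem_filter.1 hs₂J).2
        have h14 : s₂ • m i₀ ∈ π := by
          have := π.add_mem h12 hvπ; simpa using this
        have h15 : s₀ • m i₀ ∈ π := by
          have h16 : (s₂ - s₀) • m i₀ = s₂ • m i₀ - s₀ • m i₀ := sub_smul s₂ s₀ (m i₀)
          have h17 := π.sub_mem h14 h13
          rw [h16] at h17
          simpa using h17
        exact hs₀π h15
      have hsum : (∑ s ∈ Finset.univ.filter (fun s : R => s • m i₀ - v ∈ π), μ s)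
          + ∑ s ∈ Finset.univ.filter (fun s : R => (s - s₀) • m i₀ ∈ π), μ s ≤ 1 := by
        rw [← Finset.sum_union hdisj, ← hμ1]
        exact Finset.sum_le_sum_of_subset_of_nonneg (Finset.subset_univ _) (fun x _ _ => hμ0 x)
      linarith
    · push_neg at hcase
      have hdisj : Disjoint (Finset.univ.filter (fun s : R => s • m i₀ - v ∈ π))
          (Finset.univ.filter (fun s : R => s • m i₀ ∈ π)) := by
        rw [Finset.disjoint_left]
        intro s₂ hs₂A hs₂J
        exact hcase s₂ hs₂A (Finset.mem_filter.1 hs₂J).2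
      have hsum : (∑ s ∈ Finset.univ.filter (fun s : R => s • m i₀ - v ∈ π), μ s)
          + ∑ s ∈ Finset.univ.filter (fun s : R => s • m i₀ ∈ π), μ s ≤ 1 := by
        rw [← Finset.sum_union hdisj, ← hμ1]
        exact Finset.sum_le_sum_of_subset_of_nonneg (Finset.subset_univ _) (fun x _ _ => hμ0 x)
      linarith
  -- the generic final computation
  have hfinal : ∀ (w : ℝ), γ ≤ w →
      (∀ v : M, ∑ s ∈ Finset.univ.filter (fun s : R => s • m i₀ - v ∈ π), μ s ≤ w) →
      ∀ a : M, tupleLaw μ m a ≤ w * (1 + ε) / (Nat.card π : ℝ) := by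
    intro w hγw hw a
    have hmb := master_bound (tupleLaw μ m) π a ((1 - c)^T) hpow0 hBbound
    have hcm := coset_mass_le μ hμ0 hμ1 m π i₀ a w hw
    have hwpos : 0 < w := lt_of_lt_of_le hγpos hγw
    have hS : (∑ a' ∈ Finset.univ.filter (fun a' : M => a' - a ∈ π), tupleLaw μ m a')
        / (Nat.card π : ℝ) ≤ w / (Nat.card π : ℝ) := by
      gcongr
    have hsmall : (1 - c)^T ≤ ε * w / (Nat.card π : ℝ) := by
      have h20 : κ ≤ ε * w / (Nat.card π : ℝ) := by
        rw [hκ]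
        refine div_le_div₀ (by positivity) ?_ hπpos hπle
        exact mul_le_mul_of_nonneg_left hγw hε.le
      linarith
    have heq : w / (Nat.card π : ℝ) + ε * w / (Nat.card π : ℝ)
        = w * (1 + ε) / (Nat.card π : ℝ) := by
      field_simp
    linarith
  refine ⟨π, ?_, ?_, ?_⟩
  · exact hfinal (1 - α) hγα hM1
  · intro hsub
    -- the ideal `J`
    set Jid : Ideal R :=
      { carrier := {r : R | r • m i₀ ∈ π}
        add_mem' := fun {x y} hx hy => by
          simp only [Set.mem_setOf_eq] at *
          rw [add_smul]; exact π.add_mem hx hy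
        zero_mem' := by
          simp only [Set.mem_setOf_eq, zero_smul]; exact π.zero_mem
        smul_mem' := fun r x hx => by
          simp only [Set.mem_setOf_eq, smul_eq_mul] at *
          rw [mul_smul]; exact hsub r _ hx } with hJid
    have hJne : Jid ≠ ⊤ := by
      intro htop
      exact hs₀π (by rw [show s₀ • m i₀ ∈ π ↔ s₀ ∈ Jid from Iff.rfl] at *; rw [htop]; trivial)
    have hJle := IsLocalRing.le_maximalIdeal hJne
    have hM2 : ∀ v : M,
        ∑ s ∈ Finset.univ.filter (fun s : R => s • m i₀ - v ∈ π), μ s ≤ 1 - β := by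
      intro v
      by_cases hA : (Finset.univ.filter (fun s : R => s • m i₀ - v ∈ π)).Nonempty
      · obtain ⟨s₁, hs₁⟩ := hA
        have hsubset : Finset.univ.filter (fun s : R => s • m i₀ - v ∈ π)
            ⊆ Finset.univ.filter
              (fun s : R => IsLocalRing.residue R s = IsLocalRing.residue R s₁) := by
          intro s hsmem
          have h12 : s • m i₀ - v ∈ π := (Finset.mem_filter.1 hsmem).2
          have h13 : s₁ • m i₀ - v ∈ π := (Finset.mem_filter.1 hs₁).2
          have h14 : (s - s₁) • m i₀ ∈ π := by
            rw [sub_smul]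
            have h15 := π.sub_mem h12 h13
            have h16 : (s • m i₀ - v) - (s₁ • m i₀ - v) = s • m i₀ - s₁ • m i₀ := by abel
            rw [h16] at h15
            exact h15
          have h17 : s - s₁ ∈ IsLocalRing.maximalIdeal R := hJle h14
          refine Finset.mem_filter.2 ⟨Finset.mem_univ _, ?_⟩
          exact Ideal.Quotient.eq.2 h17
        calc ∑ s ∈ Finset.univ.filter (fun s : R => s • m i₀ - v ∈ π), μ s
            ≤ ∑ s ∈ Finset.univ.filter
                (fun s : R => IsLocalRing.residue R s = IsLocalRing.residue R s₁), μ s :=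
              Finset.sum_le_sum_of_subset_of_nonneg hsubset (fun x _ _ => hμ0 x)
          _ ≤ 1 - β := by
              have h18 : ∑ s ∈ Finset.univ.filter
                  (fun s : R => IsLocalRing.residue R s = IsLocalRing.residue R s₁), μ s
                  = resLaw R μ (IsLocalRing.residue R s₁) := by
                unfold resLaw
                congr 1
              exact h18 ▸ le_trans (hresle _) hβ1
      · rw [Finset.not_nonempty_iff_eq_empty] at hA
        rw [hA, Finset.sum_empty]
        linarith
    exact hfinal (1 - β) hγβ hM2
  · -- the count of exceptional indices
    have hPopπ : ∀ a : M, a ∈ Pop → a ∈ π := by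
      intro a ha
      have hmem : (1:R) • a ∈ gens := ⟨1, a, h1, ha, rfl⟩
      have := AddSubgroup.subset_closure hmem
      rw [one_smul] at this
      exact this
    have hmaps : ∀ i ∈ Finset.univ.filter (fun i : Fin l => m i ∉ π),
        m i ∈ Finset.univ.filter (fun a : M => a ∉ π) := by
      intro i hi
      exact Finset.mem_filter.2 ⟨Finset.mem_univ _, (Finset.mem_filter.1 hi).2⟩
    rw [Finset.card_eq_sum_card_fiberwise hmaps]
    have hbound : ∀ a ∈ Finset.univ.filter (fun a : M => a ∉ π),
        ((Finset.univ.filter (fun i : Fin l => m i ∉ π)).filter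
          (fun i => m i = a)).card ≤ T := by
      intro a ha
      have hnotPop : a ∉ Pop := fun hPopa => (Finset.mem_filter.1 ha).2 (hPopπ a hPopa)
      have hlt : (Finset.univ.filter (fun i : Fin l => m i = a)).card < T := by
        by_contra hge
        push_neg at hge
        exact hnotPop (Finset.mem_filter.2 ⟨Finset.mem_univ _, hge⟩)
      have hsub2 : (Finset.univ.filter (fun i : Fin l => m i ∉ π)).filter (fun i => m i = a)
          ⊆ Finset.univ.filter (fun i : Fin l => m i = a) := by
        intro i hi
        exact Finset.mem_filter.2 ⟨Finset.mem_univ _, (Finset.mem_filter.1 hi).2⟩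
      exact le_trans (Finset.card_le_card hsub2) (le_of_lt hlt)
    calc ∑ a ∈ Finset.univ.filter (fun a : M => a ∉ π),
          ((Finset.univ.filter (fun i : Fin l => m i ∉ π)).filter (fun i => m i = a)).card
        ≤ ∑ a ∈ Finset.univ.filter (fun a : M => a ∉ π), T :=
          Finset.sum_le_sum hbound
      _ = (Finset.univ.filter (fun a : M => a ∉ π)).card * T := by
          rw [Finset.sum_const, smul_eq_mul]
      _ ≤ Fintype.card M * T := by
          refine Nat.mul_le_mul_right _ ?_
          exact le_trans (Finset.card_filter_le _ _) (le_of_eq (Finset.card_univ))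
      _ = T * Fintype.card M := Nat.mul_comm _ _

end
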